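/- A semilocal ring R is right self-injective if and only if it is right small injective. -/

import Mathlib

/-- A right ideal `I` of `R` (viewed as a submodule of `R` over `Rᵐᵒᵖ`) is small if
`I + K ≠ R` for every proper right ideal `K`. -/
def IsSmallRightIdeal {R : Type*} [Ring R] (I : Submodule Rᵐᵒᵖ R) : Prop :=
  ∀ K : Submodule Rᵐᵒᵖ R, I ⊔ K = ⊤ → K = ⊤

/-- A right `R`-module `M` is small injective if every `R`-homomorphism from a small right
ideal of `R` to `M` extends to a homomorphism `R → M`. -/
def SmallInjective (R : Type*) [Ring R] (M : Type*) [AddCommGroup M] [Module Rᵐᵒᵖ M] : Prop :=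
  ∀ I : Submodule Rᵐᵒᵖ R, IsSmallRightIdeal I → ∀ f : I →ₗ[Rᵐᵒᵖ] M,
    ∃ g : R →ₗ[Rᵐᵒᵖ] M, ∀ x : I, g x = f x


open MulOpposite

section Aux
variable {R : Type*} [Ring R]

/-- `R` is linearly equivalent to `Rᵐᵒᵖ` as left `Rᵐᵒᵖ`-modules. -/
def opEquivAux : R ≃ₗ[Rᵐᵒᵖ] Rᵐᵒᵖ where
  toFun := op
  invFun := unop
  map_add' := fun _ _ => rfl
  map_smul' := fun _ _ => rfl
  left_inv := fun _ => rfl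
  right_inv := fun _ => rfl

lemma jac_mul_right {x : R} (hx : x ∈ (⊥ : Ideal R).jacobson) (y : R) :
    x * y ∈ (⊥ : Ideal R).jacobson :=
  Ideal.mul_mem_right y _ hx

/-- The Jacobson radical as a right ideal. -/
def jR (R : Type*) [Ring R] : Submodule Rᵐᵒᵖ R where
  carrier := (⊥ : Ideal R).jacobson
  add_mem' := fun h1 h2 => add_mem h1 h2
  zero_mem' := zero_mem _
  smul_mem' := fun c x hx => by
    rw [MulOpposite.smul_eq_mul_unop]
    exact jac_mul_right hx _

lemma mem_jR {x : R} : x ∈ jR R ↔ x ∈ (⊥ : Ideal R).jacobson := Iff.rfl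

lemma exists_left_inv_one_add {j : R} (hj : j ∈ (⊥ : Ideal R).jacobson) :
    ∃ z : R, z * (1 + j) = 1 := by
  obtain ⟨z, hz⟩ := Ideal.mem_jacobson_iff.1 hj 1
  rw [Ideal.mem_bot, mul_one, sub_eq_zero] at hz
  exact ⟨z, by rw [mul_add, mul_one, add_comm]; exact hz⟩

lemma isUnit_one_add_jac {j : R} (hj : j ∈ (⊥ : Ideal R).jacobson) : IsUnit (1 + j) := by
  obtain ⟨z, hz⟩ := exists_left_inv_one_add hj
  have hz' : z = 1 + -(z * j) := by
    have h1 : z + z * j = 1 := by rw [mul_add, mul_one] at hz; exact hz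
    rw [← h1]; abel
  have hmem : -(z * j) ∈ (⊥ : Ideal R).jacobson :=
    neg_mem (Ideal.mul_mem_left _ _ hj)
  obtain ⟨w, hw⟩ := exists_left_inv_one_add hmem
  rw [← hz'] at hw
  have hw' : w = 1 + j := by
    calc w = w * (z * (1 + j)) := by rw [hz, mul_one]
    _ = (w * z) * (1 + j) := by rw [mul_assoc]
    _ = 1 + j := by rw [hw, one_mul]
  exact ⟨⟨1 + j, z, by rw [← hw', hw], hz⟩, rfl⟩

end Aux

section Small
variable {R : Type*} [Ring R]

lemma isSmall_of_le {I I' : Submodule Rᵐᵒᵖ R} (h : I' ≤ I) (hI : IsSmallRightIdeal I) :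
    IsSmallRightIdeal I' := fun K hK =>
  hI K (top_unique (hK ▸ sup_le_sup_right h K))

lemma submodule_eq_top_of_one_mem {K : Submodule Rᵐᵒᵖ R} (h : (1 : R) ∈ K) : K = ⊤ := by
  rw [eq_top_iff]
  intro y _
  have : (op y) • (1 : R) ∈ K := K.smul_mem _ h
  simpa [MulOpposite.smul_eq_mul_unop] using this

lemma jR_le_coatom {M : Submodule Rᵐᵒᵖ R} (hM : IsCoatom M) : jR R ≤ M := by
  intro x hx
  by_contra hxM
  have hlt : M < M ⊔ Submodule.span Rᵐᵒᵖ {x} := by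
    refine lt_of_le_of_ne le_sup_left (fun h => hxM ?_)
    rw [h]
    exact Submodule.mem_sup_right (Submodule.mem_span_singleton_self x)
  have htop : M ⊔ Submodule.span Rᵐᵒᵖ {x} = ⊤ := hM.2 _ hlt
  have h1 : (1 : R) ∈ M ⊔ Submodule.span Rᵐᵒᵖ {x} := htop ▸ Submodule.mem_top
  obtain ⟨m, hm, y, hy, hmy⟩ := Submodule.mem_sup.1 h1
  obtain ⟨c, rfl⟩ := Submodule.mem_span_singleton.1 hy
  rw [MulOpposite.smul_eq_mul_unop] at hmy
  have hxr : -(x * c.unop) ∈ (⊥ : Ideal R).jacobson := neg_mem (jac_mul_right hx _)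
  have hu : IsUnit m := by
    have : m = 1 + -(x * c.unop) := by rw [← hmy]; abel
    exact this ▸ isUnit_one_add_jac hxr
  obtain ⟨u, hu⟩ := hu
  have h1M : (1 : R) ∈ M := by
    have : (op ((u⁻¹ : Rˣ) : R)) • m ∈ M := M.smul_mem _ hm
    rw [MulOpposite.smul_eq_mul_unop] at this
    simpa [← hu, Units.mul_inv] using this
  exact hM.1 (submodule_eq_top_of_one_mem h1M)

lemma jR_small : IsSmallRightIdeal (jR R) := by
  intro K hK
  rcases subsingleton_or_nontrivial R with h | h
  · exact submodule_eq_top_of_one_mem (by rw [Subsingleton.elim (1 : R) 0]; exact K.zero_mem)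
  by_contra hKtop
  -- transfer to ideals of Rᵐᵒᵖ to find a maximal right ideal above K
  let oi : Submodule Rᵐᵒᵖ R ≃o Ideal Rᵐᵒᵖ := Submodule.orderIsoMapComap (opEquivAux (R := R))
  have hne : oi K ≠ ⊤ := fun h => hKtop (by simpa using oi.injective (by simpa using h))
  obtain ⟨Mi, hMi, hKMi⟩ := Ideal.exists_le_maximal _ hne
  have hco : IsCoatom (oi.symm Mi) := by
    rw [oi.symm.isCoatom_iff]
    exact Ideal.isMaximal_def.1 hMi
  have hKM : K ≤ oi.symm Mi := by
    rw [← oi.le_iff_le, oi.apply_symm_apply]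
    exact hKMi
  have : (⊤ : Submodule Rᵐᵒᵖ R) ≤ oi.symm Mi := by
    rw [← hK]
    exact sup_le (jR_le_coatom hco) hKM
  exact hco.1 (top_unique this)

end Small

section QuotientRing
variable (R : Type*) [Ring R]

/-- The Jacobson radical as a two-sided ideal. -/
def jTsi : TwoSidedIdeal R :=
  TwoSidedIdeal.mk' ((⊥ : Ideal R).jacobson)
    (zero_mem _) (fun h1 h2 => add_mem h1 h2) (fun h => neg_mem h)
    (fun h => Ideal.mul_mem_left _ _ h) (fun h => jac_mul_right h _)

/-- The semisimple quotient ring `R / J(R)`. -/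
abbrev ARing := (jTsi R).ringCon.Quotient

def piA : R →+* ARing R := RingCon.mk' _

variable {R}

lemma piA_surjective : Function.Surjective (piA R) := fun a =>
  Quotient.inductionOn' a fun x => ⟨x, rfl⟩

lemma piA_eq_piA_iff {x y : R} :
    piA R x = piA R y ↔ x - y ∈ (⊥ : Ideal R).jacobson := by
  show (x : (jTsi R).ringCon.Quotient) = y ↔ _
  rw [RingCon.eq, TwoSidedIdeal.rel_iff]
  simp [jTsi]

lemma piA_eq_zero_iff {x : R} : piA R x = 0 ↔ x ∈ (⊥ : Ideal R).jacobson := by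
  have : (0 : ARing R) = piA R 0 := (map_zero _).symm
  rw [this, piA_eq_piA_iff, sub_zero]

end QuotientRing

section Semisimple
variable {R : Type*} [Ring R]

/-- pull back a left ideal of `A = R/J` to a left ideal of `R`. -/
def PA (S : Submodule (ARing R) (ARing R)) : Submodule R R where
  carrier := {x : R | piA R x ∈ S}
  add_mem' := fun h1 h2 => by simp_all [map_add, S.add_mem h1 h2]
  zero_mem' := by simp [Set.mem_setOf_eq]
  smul_mem' := fun r x hx => by
    have : piA R (r * x) = piA R r * piA R x := map_mul _ _ _
    simp only [Set.mem_setOf_eq, smul_eq_mul, this]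
    have := S.smul_mem (piA R r) hx
    simpa [smul_eq_mul] using this

/-- The order isomorphism between left ideals of `A = R/J` and `R`-submodules of `R ⧸ J`. -/
def ssOrderIso : Submodule (ARing R) (ARing R) ≃o Submodule R (R ⧸ (⊥ : Ideal R).jacobson) where
  toFun S := (PA S).map ((⊥ : Ideal R).jacobson).mkQ
  invFun U := {
    carrier := piA R '' {x : R | ((⊥ : Ideal R).jacobson).mkQ x ∈ U}
    add_mem' := by
      rintro a b ⟨x, hx, rfl⟩ ⟨y, hy, rfl⟩
      exact ⟨x + y, by simp only [Set.mem_setOf_eq, map_add] at *; exact U.add_mem hx hy,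
        map_add _ _ _⟩
    zero_mem' := ⟨0, by simp, map_zero _⟩
    smul_mem' := by
      rintro c a ⟨x, hx, rfl⟩
      obtain ⟨r, rfl⟩ := piA_surjective c
      refine ⟨r * x, ?_, ?_⟩
      · simp only [Set.mem_setOf_eq] at hx ⊢
        have : ((⊥ : Ideal R).jacobson).mkQ (r * x) =
            r • ((⊥ : Ideal R).jacobson).mkQ x := by
          exact map_smul _ r x
        rw [this]
        exact U.smul_mem r hx
      · simp [map_mul, smul_eq_mul] }
  left_inv := by
    intro S
    ext a
    simp only [Submodule.mem_mk, AddSubmonoid.mem_mk, AddSubsemigroup.mem_mk, Set.mem_image,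
      Set.mem_setOf_eq]
    constructor
    · rintro ⟨x, hx, rfl⟩
      obtain ⟨z, hz, hzx⟩ := Submodule.mem_map.1 hx
      have : piA R z = piA R x :=
        piA_eq_piA_iff.2 (by simpa using (Submodule.Quotient.eq _).1 hzx)
      exact this ▸ hz
    · intro ha
      obtain ⟨x, rfl⟩ := piA_surjective a
      exact ⟨x, Submodule.mem_map.2 ⟨x, ha, rfl⟩, rfl⟩
  right_inv := by
    intro U
    ext y
    simp only [Submodule.mem_map]
    constructor
    · rintro ⟨x, hx, rfl⟩
      have hx2 : piA R x ∈ (piA R '' {x : R | ((⊥ : Ideal R).jacobson).mkQ x ∈ U} : Set _) := hx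
      obtain ⟨x', hx', hxx⟩ := hx2
      have hmk : ((⊥ : Ideal R).jacobson).mkQ x' = ((⊥ : Ideal R).jacobson).mkQ x := by
        rw [Submodule.mkQ_apply, Submodule.mkQ_apply, Submodule.Quotient.eq]
        exact piA_eq_piA_iff.1 hxx
      rw [← hmk]
      exact hx'
    · intro hy
      obtain ⟨x, rfl⟩ := Submodule.mkQ_surjective _ y
      exact ⟨x, ⟨x, hy, rfl⟩, rfl⟩
  map_rel_iff' := by
    intro S S'
    simp only [Equiv.coe_fn_mk]
    constructor
    · intro h a ha
      obtain ⟨x, rfl⟩ := piA_surjective a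
      have : ((⊥ : Ideal R).jacobson).mkQ x ∈ (PA S).map ((⊥ : Ideal R).jacobson).mkQ :=
        Submodule.mem_map.2 ⟨x, ha, rfl⟩
      obtain ⟨x', hx', hxx'⟩ := Submodule.mem_map.1 (h this)
      have : piA R x' = piA R x := by
        rw [piA_eq_piA_iff]
        have := (Submodule.Quotient.eq _).1 hxx'
        simpa using this
      exact this ▸ hx'
    · intro h
      exact Submodule.map_mono (fun x hx => h hx)

theorem isSemisimpleRing_ARing
    (hsl : IsSemisimpleModule R (R ⧸ (⊥ : Ideal R).jacobson)) :
    IsSemisimpleRing (ARing R) :=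
  (isSemisimpleModule_iff _ _).mpr (ssOrderIso (R := R)).symm.complementedLattice

end Semisimple

section RightIdeal
variable {A : Type*} [Ring A]

/-- left annihilator of a set, as a left ideal -/
def lann (s : Set A) : Ideal A where
  carrier := {x : A | ∀ t ∈ s, x * t = 0}
  add_mem' := fun h1 h2 => fun t ht => by rw [add_mul, h1 t ht, h2 t ht, add_zero]
  zero_mem' := fun t _ => zero_mul t
  smul_mem' := fun r x hx => fun t ht => by
    rw [smul_eq_mul, mul_assoc, hx t ht, mul_zero]

lemma lann_antitone {s s' : Set A} (h : s ⊆ s') : lann s' ≤ lann s :=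
  fun _ hx t ht => hx t (h ht)

theorem rightIdeal_idem [IsSemisimpleRing A] (T : Submodule Aᵐᵒᵖ A) :
    ∃ e : A, IsIdempotentElem e ∧ ∀ b : A, b ∈ T ↔ e * b = b := by
  classical
  have hart : IsArtinian A A := inferInstance
  set 𝒮 : Set (Ideal A) := (fun F : Finset A => lann (F : Set A)) '' {F : Finset A | ↑F ⊆ (T : Set A)}
  obtain ⟨I₀, ⟨F₀, hF₀T, rfl⟩, hmin⟩ :=
    IsArtinian.set_has_minimal (R := A) (M := A) 𝒮 ⟨lann (∅ : Finset A), ∅, by simp, rfl⟩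
  have hF₀T' : (F₀ : Set A) ⊆ (T : Set A) := hF₀T
  -- lann T = lann F₀
  have hla : lann (T : Set A) = lann (F₀ : Set A) := by
    refine le_antisymm (lann_antitone hF₀T') ?_
    intro x hx t ht
    have hsub : ((insert t F₀ : Finset A) : Set A) ⊆ (T : Set A) := by
      rw [Finset.coe_insert]
      exact Set.insert_subset ht hF₀T'
    have h1 : lann ((insert t F₀ : Finset A) : Set A) ∈ 𝒮 := ⟨insert t F₀, hsub, rfl⟩
    have h2 : lann ((insert t F₀ : Finset A) : Set A) ≤ lann (F₀ : Set A) :=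
      lann_antitone (by rw [Finset.coe_insert]; exact Set.subset_insert _ _)
    have h3 : lann ((insert t F₀ : Finset A) : Set A) = lann (F₀ : Set A) :=
      le_antisymm h2 (fun y hy => by
        by_contra hy'
        exact hmin _ h1 (lt_of_le_of_ne h2 (fun he => hy' (he ▸ hy))))
    have : x ∈ lann ((insert t F₀ : Finset A) : Set A) := h3 ▸ hx
    exact this t (by simp)
  -- key: double annihilator closure
  have key : ∀ b : A, (∀ x ∈ lann (T : Set A), x * b = 0) → b ∈ T := by
    intro b hb
    set ι := {x // x ∈ F₀} with hι
    let δ : ι → ι → A := fun i => Pi.single i 1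
    let φ : A →ₗ[A] (ι → A) := LinearMap.pi fun i => LinearMap.toSpanSingleton A A i.1
    let ψ : A →ₗ[A] A := LinearMap.toSpanSingleton A A b
    have hker : LinearMap.ker φ ≤ LinearMap.ker ψ := by
      intro x hx
      rw [LinearMap.mem_ker] at hx ⊢
      have hxl : x ∈ lann (F₀ : Set A) := fun t ht => by
        have := congrFun hx ⟨t, ht⟩
        simpa [φ, LinearMap.toSpanSingleton, smul_eq_mul] using this
      have : x ∈ lann (T : Set A) := hla ▸ hxl
      simpa [ψ, LinearMap.toSpanSingleton, smul_eq_mul] using hb x this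
    obtain ⟨C, hC⟩ := exists_isCompl (LinearMap.range φ)
    let pr := Submodule.projectionOnto _ C hC
    let E := φ.quotKerEquivRange
    let g : (ι → A) →ₗ[A] A :=
      (Submodule.liftQ (LinearMap.ker φ) ψ hker) ∘ₗ (E.symm : LinearMap.range φ →ₗ[A] A ⧸ LinearMap.ker φ) ∘ₗ pr
    have hgφ : g (φ 1) = b := by
      have h1 : pr (φ 1) = ⟨φ 1, LinearMap.mem_range_self φ 1⟩ := by
        have := Submodule.projectionOnto_apply_left hC ⟨φ 1, LinearMap.mem_range_self φ 1⟩
        simpa [pr] using this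
      have h2 : E.symm ⟨φ 1, LinearMap.mem_range_self φ 1⟩ =
          Submodule.Quotient.mk (1 : A) := by
        rw [LinearEquiv.symm_apply_eq]
        exact Subtype.ext (φ.quotKerEquivRange_apply_mk 1).symm
      simp only [g, LinearMap.comp_apply, LinearEquiv.coe_coe, h1, h2]
      simp [ψ, LinearMap.toSpanSingleton, Submodule.liftQ_apply, smul_eq_mul]
    have hφ1 : φ 1 = ∑ i : ι, (i.1 : A) • δ i := by
      funext j
      rw [Finset.sum_apply]
      have hterm : ∀ i : ι, ((i.1 : A) • δ i) j = (if j = i then (i.1 : A) else 0) := by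
        intro i
        simp only [Pi.smul_apply, δ, Pi.single_apply, smul_eq_mul]
        by_cases h : j = i <;> simp [h]
      rw [Finset.sum_congr rfl (fun i _ => hterm i)]
      rw [Finset.sum_ite_eq]
      simp [φ, LinearMap.toSpanSingleton, smul_eq_mul]
    rw [← hgφ, hφ1, map_sum]
    refine Submodule.sum_mem T fun i _ => ?_
    rw [LinearMap.map_smul, smul_eq_mul]
    have := T.smul_mem (MulOpposite.op (g (δ i))) (hF₀T' i.2)
    simpa [MulOpposite.smul_eq_mul_unop] using this
  -- now produce the idempotent
  obtain ⟨f, hfidem, hf⟩ := IsSemisimpleRing.ideal_eq_span_idempotent (lann (T : Set A))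
  have hfT : f ∈ lann (T : Set A) := hf ▸ Ideal.subset_span rfl
  refine ⟨1 - f, hfidem.one_sub, fun b => ⟨fun hb => ?_, fun hb => ?_⟩⟩
  · have : f * b = 0 := hfT b hb
    rw [sub_mul, one_mul, this, sub_zero]
  · have hfb : f * b = 0 := by
      have : f * ((1 - f) * b) = (f - f * f) * b := by
        rw [← mul_assoc]
        congr 1
        rw [mul_sub, mul_one]
      rw [hb] at this
      rw [this, hfidem.eq, sub_self, zero_mul]
    refine key b (fun x hx => ?_)
    rw [hf] at hx
    obtain ⟨a, rfl⟩ := Ideal.mem_span_singleton'.1 hx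
    rw [mul_assoc, hfb, mul_zero]

end RightIdeal

section Main
variable {R : Type*} [Ring R]

lemma exists_complement_mod_jac
    (hsl : IsSemisimpleModule R (R ⧸ (⊥ : Ideal R).jacobson))
    (T : Submodule Rᵐᵒᵖ R) :
    ∃ K : Submodule Rᵐᵒᵖ R, T ⊔ K = ⊤ ∧ T ⊓ K ≤ jR R := by
  haveI := isSemisimpleRing_ARing hsl
  -- the image of T in A as a right ideal
  let Tb : Submodule (ARing R)ᵐᵒᵖ (ARing R) := {
    carrier := piA R '' (T : Set R)
    add_mem' := by
      rintro a b ⟨x, hx, rfl⟩ ⟨y, hy, rfl⟩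
      exact ⟨x + y, T.add_mem hx hy, map_add _ _ _⟩
    zero_mem' := ⟨0, T.zero_mem, map_zero _⟩
    smul_mem' := by
      rintro c a ⟨x, hx, rfl⟩
      obtain ⟨r, hr⟩ := piA_surjective c.unop
      refine ⟨x * r, ?_, ?_⟩
      · have := T.smul_mem (MulOpposite.op r) hx
        simpa [MulOpposite.smul_eq_mul_unop] using this
      · rw [map_mul, MulOpposite.smul_eq_mul_unop, hr] }
  obtain ⟨e, he, hmem⟩ := rightIdeal_idem Tb
  refine ⟨{
    carrier := {x : R | e * piA R x = 0}
    add_mem' := fun h1 h2 => by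
      simp only [Set.mem_setOf_eq, map_add, mul_add] at *
      rw [h1, h2, add_zero]
    zero_mem' := by simp
    smul_mem' := fun c x hx => by
      simp only [Set.mem_setOf_eq, MulOpposite.smul_eq_mul_unop, map_mul] at *
      rw [← mul_assoc, hx, zero_mul] }, ?_, ?_⟩
  · -- sup = ⊤
    rw [eq_top_iff]
    intro x _
    have h1 : e * piA R x ∈ Tb := (hmem _).2 (by rw [← mul_assoc, he.eq])
    obtain ⟨t, ht, hpt⟩ := h1
    refine Submodule.mem_sup.2 ⟨t, ht, x - t, ?_, by abel⟩
    show e * piA R (x - t) = 0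
    rw [map_sub, mul_sub, hpt, ← mul_assoc, he.eq]
    exact sub_self _
  · -- inf ≤ jR
    rintro x ⟨hxT, hxK⟩
    have h1 : piA R x ∈ Tb := ⟨x, hxT, rfl⟩
    have h2 : e * piA R x = piA R x := (hmem _).1 h1
    have h3 : e * piA R x = 0 := hxK
    rw [mem_jR, ← piA_eq_zero_iff]
    rw [← h2, h3]

theorem extension_from_right_ideal
    (hsl : IsSemisimpleModule R (R ⧸ (⊥ : Ideal R).jacobson))
    (hsi : SmallInjective R R) (T : Submodule Rᵐᵒᵖ R) (f : T →ₗ[Rᵐᵒᵖ] R) :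
    ∃ g : R →ₗ[Rᵐᵒᵖ] R, ∀ x : T, g x = f x := by
  -- extend f restricted to T ⊓ jR
  have hsmall : IsSmallRightIdeal (T ⊓ jR R) := isSmall_of_le inf_le_right jR_small
  obtain ⟨g₀, hg₀⟩ := hsi (T ⊓ jR R) hsmall (f ∘ₗ Submodule.inclusion inf_le_left)
  -- the reduced map vanishing on T ⊓ jR
  let f₁ : T →ₗ[Rᵐᵒᵖ] R := f - g₀ ∘ₗ T.subtype
  have hf₁ : ∀ x : T, (x : R) ∈ jR R → f₁ x = 0 := by
    intro x hx
    have := hg₀ ⟨(x : R), ⟨x.2, hx⟩⟩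
    simp only [LinearMap.comp_apply] at this
    have h2 : Submodule.inclusion (inf_le_left : T ⊓ jR R ≤ T) ⟨(x : R), ⟨x.2, hx⟩⟩ = x :=
      Subtype.ext rfl
    rw [h2] at this
    simp [f₁, LinearMap.sub_apply, this]
  obtain ⟨K, hsup, hinf⟩ := exists_complement_mod_jac hsl T
  -- build h : R → R extending f₁
  let q : (T × K) →ₗ[Rᵐᵒᵖ] R := T.subtype.coprod K.subtype
  have hq : Function.Surjective q := by
    rw [← LinearMap.range_eq_top, LinearMap.range_coprod, Submodule.range_subtype,
      Submodule.range_subtype]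
    exact hsup
  let F : (T × K) →ₗ[Rᵐᵒᵖ] R := f₁ ∘ₗ LinearMap.fst Rᵐᵒᵖ T K
  have hker : LinearMap.ker q ≤ LinearMap.ker F := by
    rintro ⟨t, k⟩ htk
    rw [LinearMap.mem_ker] at htk ⊢
    have htk' : (t : R) = -(k : R) := by
      have h0 : (t : R) + (k : R) = 0 := htk
      exact eq_neg_of_add_eq_zero_left h0
    have htj : (t : R) ∈ jR R := hinf ⟨t.2, by rw [htk']; exact K.neg_mem k.2⟩
    simpa [F] using hf₁ t htj
  let E := q.quotKerEquivOfSurjective hq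
  let h : R →ₗ[Rᵐᵒᵖ] R := (Submodule.liftQ (LinearMap.ker q) F hker) ∘ₗ (E.symm : R →ₗ[Rᵐᵒᵖ] _)
  have hh : ∀ x : T, h x = f₁ x := by
    intro x
    have h1 : E (Submodule.Quotient.mk (x, 0)) = (x : R) := by
      show q (x, 0) = (x : R)
      simp [q]
    have h2 : E.symm (x : R) = Submodule.Quotient.mk ((x, 0) : T × K) := by
      rw [LinearEquiv.symm_apply_eq, h1]
    simp only [h, LinearMap.comp_apply, LinearEquiv.coe_coe, h2, Submodule.liftQ_apply]
    simp [F]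
  refine ⟨g₀ + h, fun x => ?_⟩
  rw [LinearMap.add_apply, hh x]
  simp [f₁]

end Main



/-- A semilocal ring (`R/J(R)` semisimple) is right self-injective iff it is right small
injective. -/
theorem stmt_13 {R : Type*} [Ring R]
    (hsl : IsSemisimpleModule R (R ⧸ (⊥ : Ideal R).jacobson)) :
    Module.Injective Rᵐᵒᵖ R ↔ SmallInjective R R := by
  constructor
  · intro hinj I _ f
    obtain ⟨h, hh⟩ := hinj.out I.subtype (Submodule.injective_subtype I) f
    exact ⟨h, hh⟩
  · intro hsi
    refine Module.Baer.injective ?_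
    intro I g
    let T : Submodule Rᵐᵒᵖ R := Submodule.comap (opEquivAux (R := R)).toLinearMap I
    let fres : T →ₗ[Rᵐᵒᵖ] I :=
      (opEquivAux (R := R)).toLinearMap.restrict (fun x hx => hx)
    obtain ⟨h, hh⟩ := extension_from_right_ideal hsl hsi T (g ∘ₗ fres)
    refine ⟨h ∘ₗ (opEquivAux (R := R)).symm.toLinearMap, fun x hx => ?_⟩
    have hx' : MulOpposite.unop x ∈ T :=
      Submodule.mem_comap.2 (show MulOpposite.op (MulOpposite.unop x) ∈ I by simpa using hx)
    have h1 := hh ⟨MulOpposite.unop x, hx'⟩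
    have h2 : fres ⟨MulOpposite.unop x, hx'⟩ = ⟨x, hx⟩ := Subtype.ext (by simp [fres, opEquivAux])
    simp only [LinearMap.comp_apply] at h1 ⊢
    rw [h2] at h1
    exact h1
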